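/- Every separable density operator ρ_AB on a finite-dimensional bipartite Hilbert space satisfies the reduction criterion: ρ_A ⊗ 1_B ≥ ρ_AB, where ρ_A = tr_B(ρ_AB). -/

import Mathlib

open Matrix BigOperators Kronecker
open scoped ComplexOrder Classical

noncomputable section

/-- Matrix logarithm via the functional calculus (spectral decomposition);
junk value `0` for non-Hermitian matrices and `Real.log 0 = 0` on the kernel. -/
def mlog {n : Type*} [Fintype n] [DecidableEq n] (A : Matrix n n ℂ) : Matrix n n ℂ :=
  if hA : A.IsHermitian then
    (hA.eigenvectorUnitary : Matrix n n ℂ) *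
      Matrix.diagonal (fun i => (Real.log (hA.eigenvalues i) : ℂ)) *
      star (hA.eigenvectorUnitary : Matrix n n ℂ)
  else 0

/-- Von Neumann entropy `S(ρ) = -tr(ρ log ρ)`. -/
def vN {n : Type*} [Fintype n] [DecidableEq n] (ρ : Matrix n n ℂ) : ℝ :=
  -((ρ * mlog ρ).trace.re)

/-- Quantum relative entropy `S(σ‖ρ) = tr(σ log σ - σ log ρ)`. -/
def relEnt {n : Type*} [Fintype n] [DecidableEq n] (σ ρ : Matrix n n ℂ) : ℝ :=
  ((σ * mlog σ).trace - (σ * mlog ρ).trace).re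

/-- Extended-real-valued relative entropy: `⊤` unless `ker ρ ⊆ ker σ`. -/
def relEntE {n : Type*} [Fintype n] [DecidableEq n] (σ ρ : Matrix n n ℂ) : EReal :=
  if ∀ x : n → ℂ, ρ *ᵥ x = 0 → σ *ᵥ x = 0 then ((relEnt σ ρ : ℝ) : EReal) else ⊤

/-- Partial trace over the second (B) factor. -/
def ptraceB {a b : Type*} [Fintype a] [Fintype b]
    (M : Matrix (a × b) (a × b) ℂ) : Matrix a a ℂ :=
  Matrix.of fun i j => ∑ k : b, M (i, k) (j, k)

/-- Partial trace over the first (A) factor. -/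
def ptraceA {a b : Type*} [Fintype a] [Fintype b]
    (M : Matrix (a × b) (a × b) ℂ) : Matrix b b ℂ :=
  Matrix.of fun i j => ∑ k : a, M (k, i) (k, j)

/-- A density operator: positive semidefinite with unit trace. -/
def IsDensity {n : Type*} [Fintype n] (ρ : Matrix n n ℂ) : Prop :=
  ρ.PosSemidef ∧ ρ.trace = 1

end

/-- A separable bipartite state: a finite convex combination of product states. -/
def IsSeparableState {a b : Type*} [Fintype a] [Fintype b]
    (ρ : Matrix (a × b) (a × b) ℂ) : Prop :=
  ∃ (k : ℕ) (p : Fin k → ℝ) (ρA : Fin k → Matrix a a ℂ) (ρB : Fin k → Matrix b b ℂ),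
    (∀ i, 0 ≤ p i) ∧ (∑ i, p i = 1) ∧ (∀ i, IsDensity (ρA i)) ∧ (∀ i, IsDensity (ρB i)) ∧
    ρ = ∑ i, ((p i : ℂ) • (ρA i ⊗ₖ ρB i))


section Aux
open Matrix

lemma kronecker_conjTranspose' {l m n p : Type*} (A : Matrix l m ℂ) (B : Matrix n p ℂ) :
    (A ⊗ₖ B)ᴴ = Aᴴ ⊗ₖ Bᴴ := by
  ext ⟨i, j⟩ ⟨k, l⟩
  simp [Matrix.conjTranspose_apply, Matrix.kroneckerMap_apply, mul_comm]

lemma PosSemidef.kron {a b : Type*} [Fintype a] [DecidableEq a] [Fintype b] [DecidableEq b]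
    {A : Matrix a a ℂ} {B : Matrix b b ℂ}
    (hA : A.PosSemidef) (hB : B.PosSemidef) : (A ⊗ₖ B).PosSemidef := by
  exact hA.kronecker hB

lemma PosSemidef.smul_c {n : Type*} [Fintype n] {M : Matrix n n ℂ}
    (hM : M.PosSemidef) {c : ℝ} (hc : 0 ≤ c) : ((c : ℂ) • M).PosSemidef := by
  constructor
  · have hH := hM.isHermitian
    unfold Matrix.IsHermitian at *
    rw [Matrix.conjTranspose_smul, hH]
    congr 1
    simp [Complex.ext_iff]
  · intro x
    exact (hM.smul (a := (c : ℂ)) (by exact_mod_cast Complex.zero_le_real.mpr hc)).2 x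

lemma one_sub_density {n : Type*} [Fintype n] [DecidableEq n] {ρ : Matrix n n ℂ}
    (hρ : IsDensity ρ) : ((1 : Matrix n n ℂ) - ρ).PosSemidef := by
  obtain ⟨hpsd, htr⟩ := hρ
  have hH := hpsd.isHermitian
  have hspec := hH.spectral_theorem
  set U : Matrix n n ℂ := (hH.eigenvectorUnitary : Matrix n n ℂ) with hU
  have hUU : U * star U = 1 := Matrix.mem_unitaryGroup_iff.mp hH.eigenvectorUnitary.2
  have htr' : ∑ i, hH.eigenvalues i = 1 := by
    have h1 : ρ.trace = ∑ i, (hH.eigenvalues i : ℂ) := by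
      conv_lhs => rw [hspec]
      rw [Unitary.conjStarAlgAut_apply, Matrix.trace_mul_cycle,
        Matrix.mem_unitaryGroup_iff'.mp hH.eigenvectorUnitary.2, Matrix.one_mul,
        Matrix.trace_diagonal]
      simp
    rw [htr] at h1
    exact_mod_cast congrArg Complex.re h1.symm
  have hle : ∀ i, hH.eigenvalues i ≤ 1 := fun i => by
    rw [← htr']
    exact Finset.single_le_sum (fun j _ => hpsd.eigenvalues_nonneg j) (Finset.mem_univ i)
  have key : (1 : Matrix n n ℂ) - ρ =
      U * Matrix.diagonal (fun i => ((1 - hH.eigenvalues i : ℝ) : ℂ)) * star U := by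
    have h1 : (1 : Matrix n n ℂ) = U * 1 * star U := by rw [Matrix.mul_one, hUU]
    conv_lhs => rw [hspec, h1]
    rw [Unitary.conjStarAlgAut_apply, ← Unitary.coe_star, ← hU, ← Matrix.sub_mul, ← Matrix.mul_sub]
    congr 1
    congr 1
    rw [← Matrix.diagonal_one, Matrix.diagonal_sub]
    congr 1
    funext i
    push_cast
    simp
  rw [key, Matrix.star_eq_conjTranspose]
  refine Matrix.PosSemidef.mul_mul_conjTranspose_same ?_ U
  refine Matrix.PosSemidef.diagonal fun i => ?_
  show (0 : ℂ) ≤ _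
  exact_mod_cast Complex.zero_le_real.mpr (by linarith [hle i])

lemma ptraceB_sum {a b : Type*} [Fintype a] [Fintype b] {k : ℕ}
    (p : Fin k → ℝ) (ρA : Fin k → Matrix a a ℂ) (ρB : Fin k → Matrix b b ℂ)
    (hB : ∀ i, (ρB i).trace = 1) :
    ptraceB (∑ i, ((p i : ℂ) • (ρA i ⊗ₖ ρB i))) = ∑ i, (p i : ℂ) • ρA i := by
  ext x y
  simp only [ptraceB, Matrix.of_apply, Matrix.sum_apply, Matrix.smul_apply,
    Matrix.kroneckerMap_apply, smul_eq_mul]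
  rw [Finset.sum_comm]
  refine Finset.sum_congr rfl fun i _ => ?_
  have : ∑ m : b, (p i : ℂ) * (ρA i x y * ρB i m m) = (p i : ℂ) * (ρA i x y * (ρB i).trace) := by
    rw [Matrix.trace, Finset.mul_sum, Finset.mul_sum]
    rfl
  rw [this, hB i, mul_one]

end Aux

/-- separable states satisfy the reduction criterion. -/
theorem separable_reduction {a b : Type*}
    [Fintype a] [DecidableEq a] [Fintype b] [DecidableEq b]
    (ρ : Matrix (a × b) (a × b) ℂ) (hsep : IsSeparableState ρ) :
    (ptraceB ρ ⊗ₖ (1 : Matrix b b ℂ) - ρ).PosSemidef := by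
  obtain ⟨k, p, ρA, ρB, hp, hps, hA, hB, hρ⟩ := hsep
  have hptr : ptraceB ρ = ∑ i, (p i : ℂ) • ρA i := by
    rw [hρ]; exact ptraceB_sum p ρA ρB fun i => (hB i).2
  have hdecomp : ptraceB ρ ⊗ₖ (1 : Matrix b b ℂ) - ρ
      = ∑ i, (p i : ℂ) • (ρA i ⊗ₖ ((1 : Matrix b b ℂ) - ρB i)) := by
    rw [hptr, hρ]
    ext ⟨x1, y1⟩ ⟨x2, y2⟩
    simp only [Matrix.sub_apply, Matrix.sum_apply, Matrix.smul_apply,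
      Matrix.kroneckerMap_apply, Matrix.one_apply, smul_eq_mul, Finset.sum_mul]
    rw [← Finset.sum_sub_distrib]
    refine Finset.sum_congr rfl fun i _ => ?_
    by_cases h : y1 = y2 <;> simp [h] <;> ring
  rw [hdecomp]
  refine Finset.sum_induction _ _ (fun x y hx hy => hx.add hy) Matrix.PosSemidef.zero
    fun i _ => ?_
  exact PosSemidef.smul_c (PosSemidef.kron (hA i).1 (one_sub_density (hB i))) (hp i)
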